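/- Let $m \geq 1$ be an integer. In the formal power series ring $\mathbb{C}[[t]]$, the element $1 - t^{3m+1}$ is invertible; set $x = t^3$ and $y = t^{3m} \cdot (1 - t^{3m+1})^{-1}$. Then $(y - x^m)^3 = x^{3m+1} y^3$, and moreover $y - x^m = t^{6m+1} \cdot (1 - t^{3m+1})^{-1}$; in particular the power series $y - x^m$ has order exactly $6m+1$ (its lowest-order term is $t^{6m+1}$). -/

import Mathlib

open PowerSeries

/-- In `ℂ[[t]]`, with `x = t³` and `y = t^{3m}·(1-t^{3m+1})⁻¹`, one has
`(y - x^m)³ = x^{3m+1}·y³` and `y - x^m = t^{6m+1}·(1-t^{3m+1})⁻¹`; in particular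
`y - x^m` has order exactly `6m+1`, with lowest-order term `t^{6m+1}`. -/
theorem rational_parameterization (m : ℕ) (hm : 1 ≤ m) :
    IsUnit ((1 : PowerSeries ℂ) - X ^ (3 * m + 1)) ∧
    ((X : PowerSeries ℂ) ^ (3 * m) * (1 - X ^ (3 * m + 1))⁻¹ -
        ((X : PowerSeries ℂ) ^ 3) ^ m) ^ 3 =
      ((X : PowerSeries ℂ) ^ 3) ^ (3 * m + 1) *
        ((X : PowerSeries ℂ) ^ (3 * m) * (1 - X ^ (3 * m + 1))⁻¹) ^ 3 ∧
    (X : PowerSeries ℂ) ^ (3 * m) * (1 - X ^ (3 * m + 1))⁻¹ -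
        ((X : PowerSeries ℂ) ^ 3) ^ m =
      X ^ (6 * m + 1) * (1 - X ^ (3 * m + 1))⁻¹ ∧
    ((X : PowerSeries ℂ) ^ (3 * m) * (1 - X ^ (3 * m + 1))⁻¹ -
        ((X : PowerSeries ℂ) ^ 3) ^ m).order = ((6 * m + 1 : ℕ) : ℕ∞) ∧
    (PowerSeries.coeff (R := ℂ) (6 * m + 1))
        ((X : PowerSeries ℂ) ^ (3 * m) * (1 - X ^ (3 * m + 1))⁻¹ -
          ((X : PowerSeries ℂ) ^ 3) ^ m) = 1 := by
  set u : PowerSeries ℂ := 1 - X ^ (3 * m + 1) with hu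
  have hc : constantCoeff u = 1 := by
    simp [hu]
  have hc0 : constantCoeff u ≠ 0 := by rw [hc]; exact one_ne_zero
  have hmul : u * u⁻¹ = 1 := PowerSeries.mul_inv_cancel u hc0
  have hunit : IsUnit u := IsUnit.of_mul_eq_one _ hmul
  have hci : constantCoeff u⁻¹ = 1 := by
    rw [PowerSeries.constantCoeff_inv, hc, inv_one]
  -- key: u⁻¹ - 1 = X^{3m+1} * u⁻¹
  have hkey : u⁻¹ - 1 = X ^ (3 * m + 1) * u⁻¹ := by
    calc u⁻¹ - 1 = u⁻¹ - u * u⁻¹ := by rw [hmul]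
    _ = (1 - u) * u⁻¹ := by ring
    _ = X ^ (3 * m + 1) * u⁻¹ := by rw [hu]; ring_nf
  have hyx : (X : PowerSeries ℂ) ^ (3 * m) * u⁻¹ - ((X : PowerSeries ℂ) ^ 3) ^ m =
      X ^ (6 * m + 1) * u⁻¹ := by
    have : ((X : PowerSeries ℂ) ^ 3) ^ m = X ^ (3 * m) := by
      rw [← pow_mul]
    rw [this]
    calc (X : PowerSeries ℂ) ^ (3 * m) * u⁻¹ - X ^ (3 * m)
        = X ^ (3 * m) * (u⁻¹ - 1) := by ring
      _ = X ^ (3 * m) * (X ^ (3 * m + 1) * u⁻¹) := by rw [hkey]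
      _ = X ^ (6 * m + 1) * u⁻¹ := by rw [← mul_assoc, ← pow_add]; ring_nf
  refine ⟨hunit, ?_, hyx, ?_, ?_⟩
  · rw [hyx, ← pow_mul]
    rw [mul_pow, mul_pow, ← pow_mul, ← pow_mul, ← mul_assoc, ← pow_add]
    ring_nf
  · rw [hyx, PowerSeries.order_mul, order_X_pow]
    have : u⁻¹.order = (0 : ℕ) := PowerSeries.order_eq_nat.mpr
      ⟨by simpa [PowerSeries.coeff_zero_eq_constantCoeff, hci], fun i hi =>
        absurd hi (Nat.not_lt_zero i)⟩
    rw [Nat.cast_zero] at this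
    rw [this, add_zero]
  · rw [hyx]
    have := PowerSeries.coeff_X_pow_mul u⁻¹ (6 * m + 1) 0
    simpa [hci] using this
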